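/- Let ρ_- > 0, ρ_+ > 0 with ρ_+ ≠ ρ_-, and u_- > u_+ > 0. Set Q(γ) = (ρ_+^γ − ρ_-^γ)/(ρ_+ − ρ_-) and A(γ) = (1/(4ρ_+²ρ_-²))(ρ_+^γ − (ρ_+/γ)Q(γ))² + (1 − 1/γ)(u_- /(ρ_+ρ_-))Q(γ). Then there exists γ_0 > 0 such that for all γ ∈ (1, 1 + γ_0): if ρ_+ > ρ_- then u_+ < u_- + (1/(2ρ_+ρ_-))(ρ_+^γ(ρ_+ − ρ_-) − (ρ_+/γ)(ρ_+^γ − ρ_-^γ)) − (ρ_+ − ρ_-)√A(γ), and if ρ_+ < ρ_- then u_+ < u_- + (1/(2ρ_+ρ_-))(ρ_+^γ(ρ_+ − ρ_-) − (ρ_+/γ)(ρ_+^γ − ρ_-^γ)) + (ρ_+ − ρ_-)√A(γ). Consequently (ρ_+,u_+) lies strictly below both shock curves S_1(ρ_-,u_-) and S_2(ρ_-,u_-), i.e. (ρ_+,u_+) belongs to the two-shock region IV(ρ_-,u_-). -/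
import Mathlib


/-- `Q(γ) = (ρ_+^γ − ρ_-^γ)/(ρ_+ − ρ_-)`. -/
noncomputable def Qfun (ρm ρp γ : ℝ) : ℝ := (ρp ^ γ - ρm ^ γ) / (ρp - ρm)

/-- `A(γ) = (1/(4ρ_+²ρ_-²))(ρ_+^γ − (ρ_+/γ)Q(γ))² + (1 − 1/γ)(u_- / (ρ_+ρ_-))Q(γ)`. -/
noncomputable def Afun (ρm ρp um γ : ℝ) : ℝ :=
  (1 / (4 * ρp ^ 2 * ρm ^ 2)) * (ρp ^ γ - (ρp / γ) * Qfun ρm ρp γ) ^ 2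
    + (1 - 1 / γ) * (um / (ρp * ρm)) * Qfun ρm ρp γ

/-- For `ρ_± > 0`, `ρ_+ ≠ ρ_-`, `u_- > u_+ > 0`: there is `γ_0 > 0` so that for all
`γ ∈ (1, 1 + γ_0)` the state `(ρ_+, u_+)` lies strictly below both shock curves
`S_1(ρ_-,u_-)` and `S_2(ρ_-,u_-)` of the perturbed Aw–Rascle system, i.e.
`(ρ_+,u_+)` belongs to the two-shock region `IV(ρ_-,u_-)`. -/
theorem stmt12 (ρm ρp um up : ℝ) (hρm : 0 < ρm) (hρp : 0 < ρp) (hne : ρp ≠ ρm)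
    (hu : up < um) (hup : 0 < up) :
    ∃ γ0 > (0 : ℝ), ∀ γ : ℝ, 1 < γ → γ < 1 + γ0 →
      (ρm < ρp →
        up < um + (1 / (2 * ρp * ρm)) * (ρp ^ γ * (ρp - ρm) - (ρp / γ) * (ρp ^ γ - ρm ^ γ))
          - (ρp - ρm) * Real.sqrt (Afun ρm ρp um γ)) ∧
      (ρp < ρm →
        up < um + (1 / (2 * ρp * ρm)) * (ρp ^ γ * (ρp - ρm) - (ρp / γ) * (ρp ^ γ - ρm ^ γ))
          + (ρp - ρm) * Real.sqrt (Afun ρm ρp um γ)) := by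
  have hne' : ρp - ρm ≠ 0 := sub_ne_zero.mpr hne
  set G : ℝ → ℝ := fun γ =>
    um + (1 / (2 * ρp * ρm)) * (ρp ^ γ * (ρp - ρm) - (ρp / γ) * (ρp ^ γ - ρm ^ γ))
      - |ρp - ρm| * Real.sqrt (Afun ρm ρp um γ) with hGdef
  have hcp : ContinuousAt (fun γ : ℝ => ρp ^ γ) 1 :=
    Real.continuousAt_const_rpow hρp.ne'
  have hcm : ContinuousAt (fun γ : ℝ => ρm ^ γ) 1 :=
    Real.continuousAt_const_rpow hρm.ne'
  have hcinv : ContinuousAt (fun γ : ℝ => γ⁻¹) 1 := continuousAt_inv₀ one_ne_zero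
  have hcQ : ContinuousAt (fun γ : ℝ => Qfun ρm ρp γ) 1 := by
    unfold Qfun; exact (hcp.sub hcm).div_const _
  have hcdiv : ContinuousAt (fun γ : ℝ => ρp / γ) 1 := by
    simp only [div_eq_mul_inv]
    exact continuousAt_const.mul hcinv
  have hcA : ContinuousAt (fun γ : ℝ => Afun ρm ρp um γ) 1 := by
    unfold Afun
    apply ContinuousAt.add
    · exact continuousAt_const.mul ((hcp.sub (hcdiv.mul hcQ)).pow 2)
    · apply ContinuousAt.mul _ hcQ
      apply ContinuousAt.mul _ continuousAt_const
      simp only [one_div]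
      exact continuousAt_const.sub hcinv
  have hcG : ContinuousAt G 1 := by
    apply ContinuousAt.sub
    · apply ContinuousAt.add continuousAt_const
      exact continuousAt_const.mul ((hcp.mul continuousAt_const).sub
        (hcdiv.mul (hcp.sub hcm)))
    · exact continuousAt_const.mul (Real.continuous_sqrt.continuousAt.comp hcA)
  have hQ1 : Qfun ρm ρp 1 = 1 := by
    simp [Qfun, Real.rpow_one, div_self hne']
  have hA1 : Afun ρm ρp um 1 = 0 := by
    simp [Afun, hQ1, Real.rpow_one]
  have hG1 : G 1 = um := by
    simp [hGdef, hA1, Real.rpow_one, Real.sqrt_zero]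
  have hev : ∀ᶠ γ in nhds (1 : ℝ), up < G γ :=
    hcG.eventually_const_lt (hG1 ▸ hu)
  rw [Metric.eventually_nhds_iff] at hev
  obtain ⟨ε, hε, hball⟩ := hev
  refine ⟨ε, hε, fun γ h1 h2 => ?_⟩
  have hdist : dist γ 1 < ε := by
    rw [Real.dist_eq, abs_of_pos (by linarith)]
    linarith
  have hGγ := hball hdist
  constructor
  · intro hlt
    have habs : |ρp - ρm| = ρp - ρm := abs_of_pos (by linarith)
    rw [hGdef] at hGγ
    simp only [habs] at hGγ
    linarith
  · intro hlt
    have habs : |ρp - ρm| = -(ρp - ρm) := abs_of_neg (by linarith)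
    rw [hGdef] at hGγ
    simp only [habs] at hGγ
    linarith
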